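/- Let κ > 0 be a real number. Then for every r > 0: κr + log(1/(1 + 2κr)) < log(sinh(κr)/(κr)) < κr + log(1/(1 + κr)). -/

import Mathlib

open Real

lemma key_exp_ineq (x : ℝ) (hx : 0 < x) : (1 - x) * Real.exp (2 * x) < 1 + x := by
  set f : ℝ → ℝ := fun y => 1 + y - (1 - y) * Real.exp (2 * y) with hfdef
  have hd : ∀ y : ℝ, HasDerivAt f (1 + (2 * y - 1) * Real.exp (2 * y)) y := by
    intro y
    have h1 : HasDerivAt (fun y : ℝ => 2 * y) 2 y := by
      simpa using (hasDerivAt_id y).const_mul 2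
    have he : HasDerivAt (fun y : ℝ => Real.exp (2 * y)) (Real.exp (2 * y) * 2) y := h1.exp
    have h2 : HasDerivAt (fun y : ℝ => 1 - y) (-1) y := by
      simpa using (hasDerivAt_id y).const_sub 1
    have h3 := h2.mul he
    have h4 : HasDerivAt (fun y : ℝ => 1 + y) 1 y := by
      simpa using (hasDerivAt_id y).const_add 1
    have h5 := h4.sub h3
    exact h5.congr_deriv (by ring)
  have hpos : ∀ y ∈ interior (Set.Ici (0:ℝ)), 0 < deriv f y := by
    intro y hy
    rw [interior_Ici, Set.mem_Ioi] at hy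
    rw [(hd y).deriv]
    have hne : -(2 * y) ≠ 0 := by nlinarith
    have h5 := Real.add_one_lt_exp hne
    have h6 : Real.exp (-(2 * y)) * Real.exp (2 * y) = 1 := by
      rw [← Real.exp_add]; simp
    nlinarith [Real.exp_pos (2 * y), Real.exp_pos (-(2 * y))]
  have hcont : ContinuousOn f (Set.Ici 0) := by
    apply Continuous.continuousOn; fun_prop
  have hmono : StrictMonoOn f (Set.Ici 0) :=
    strictMonoOn_of_deriv_pos (convex_Ici 0) hcont hpos
  have h7 := hmono (Set.self_mem_Ici) (Set.mem_Ici.mpr hx.le) hx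
  simp only [hfdef, mul_zero, Real.exp_zero] at h7
  nlinarith [h7]

/-- For `κ > 0` and `r > 0`,
`κr + log(1/(1+2κr)) < log(sinh(κr)/(κr)) < κr + log(1/(1+κr))`. -/
theorem log_sinh_ratio_bounds (κ : ℝ) (hκ : 0 < κ) (r : ℝ) (hr : 0 < r) :
    κ * r + Real.log (1 / (1 + 2 * κ * r)) < Real.log (Real.sinh (κ * r) / (κ * r)) ∧
    Real.log (Real.sinh (κ * r) / (κ * r)) < κ * r + Real.log (1 / (1 + κ * r)) := by
  set x := κ * r with hxdef
  have hx : 0 < x := mul_pos hκ hr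
  have hsinh : 0 < Real.sinh x := Real.sinh_pos_iff.mpr hx
  have he : 0 < Real.exp x := Real.exp_pos x
  have h2x : Real.exp (2 * x) = Real.exp x * Real.exp x := by
    rw [← Real.exp_add]; ring_nf
  have hinv : Real.exp (-x) * Real.exp x = 1 := by rw [← Real.exp_add]; simp
  have hsinh_eq : Real.sinh x = (Real.exp x - Real.exp (-x)) / 2 := Real.sinh_eq x
  have h1p : (0:ℝ) < 1 + x := by linarith
  have h1p2 : (0:ℝ) < 1 + 2 * x := by linarith
  constructor
  · -- lower bound: exp x / (1 + 2x) < sinh x / x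
    have hkey : 1 + 2 * x < Real.exp (2 * x) := by
      have := Real.add_one_lt_exp (x := 2 * x) (by positivity)
      linarith
    have hlt : Real.exp x / (1 + 2 * x) < Real.sinh x / x := by
      rw [div_lt_div_iff₀ h1p2 hx]
      nlinarith [Real.exp_pos (-x)]
    have hlog := Real.log_lt_log (by positivity) hlt
    have heq : 1 + 2 * κ * r = 1 + 2 * x := by rw [hxdef]; ring
    calc κ * r + Real.log (1 / (1 + 2 * κ * r))
        = Real.log (Real.exp x / (1 + 2 * x)) := by
          rw [heq, Real.log_div (ne_of_gt he) (ne_of_gt h1p2), Real.log_exp,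
            Real.log_div one_ne_zero (ne_of_gt h1p2), Real.log_one, hxdef]
          ring
      _ < Real.log (Real.sinh x / x) := hlog
  · -- upper bound
    have hkey := key_exp_ineq x hx
    have hlt : Real.sinh x / x < Real.exp x / (1 + x) := by
      rw [div_lt_div_iff₀ hx h1p]
      nlinarith [Real.exp_pos (-x)]
    have hlog := Real.log_lt_log (by positivity) hlt
    calc Real.log (Real.sinh x / x) < Real.log (Real.exp x / (1 + x)) := hlog
      _ = κ * r + Real.log (1 / (1 + κ * r)) := by
          rw [Real.log_div (ne_of_gt he) (ne_of_gt h1p), Real.log_exp,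
            Real.log_div one_ne_zero (ne_of_gt h1p), Real.log_one]
          ring
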